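/- Let Ω be a Polish space and let 𝒫 be a nonempty set of Borel probability measures on Ω that is compact in the topology of weak convergence of measures. Let Z : Ω → ℝ be a Borel measurable, quasi-continuous function that is integrable with respect to every P ∈ 𝒫 with sup_{P∈𝒫} E_P[|Z|] < ∞. If Z ≤ 0 quasi-surely (i.e. v({Z > 0}) = 0) and inf_{P∈𝒫} P({Z < 0}) > 0, then sup_{P∈𝒫} E_P[Z] < 0. -/

import Mathlib

open MeasureTheory Set Filter Topology BoundedContinuousFunction
open scoped NNReal

private lemma aux_integral_continuousOn
    {Ω : Type*} [TopologicalSpace Ω] [PolishSpace Ω] [MeasurableSpace Ω] [BorelSpace Ω]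
    (𝔓 : Set (ProbabilityMeasure Ω)) (f : Ω → ℝ) (C : ℝ) (hC : 0 ≤ C)
    (hf : Measurable f) (hbd : ∀ ω, |f ω| ≤ C)
    (hqc : ∀ ε : ℝ≥0, 0 < ε → ∃ O : Set Ω, IsOpen O ∧ (∀ Q ∈ 𝔓, Q O < ε) ∧
      ContinuousOn f Oᶜ) :
    ContinuousOn (fun Q : ProbabilityMeasure Ω => ∫ ω, f ω ∂(Q : Measure Ω)) 𝔓 := by
  haveI : NormalSpace Ω := by letI := TopologicalSpace.upgradeIsCompletelyMetrizable Ω; infer_instance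
  intro P hP
  rw [ContinuousWithinAt, Metric.tendsto_nhds]
  intro ε hε
  have h2C : (0:ℝ) < 2*C+1 := by linarith
  have hδ : (0:ℝ) < ε/3/(2*C+1) := by positivity
  set ε₀ : ℝ≥0 := ⟨ε/3/(2*C+1), hδ.le⟩ with hε₀def
  have hε₀pos : (0:ℝ≥0) < ε₀ := by exact_mod_cast hδ
  have hε₀coe : (ε₀:ℝ) = ε/3/(2*C+1) := rfl
  obtain ⟨O, hOopen, hOsmall, hOcont⟩ := hqc ε₀ hε₀pos
  have hOc : IsClosed Oᶜ := hOopen.isClosed_compl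
  obtain ⟨g, hg⟩ := (ContinuousMap.mk (Oᶜ.restrict f) hOcont.restrict).exists_restrict_eq hOc
  set g' : Ω → ℝ := fun x => max (min (g x) C) (-C) with hg'def
  have hg'cont : Continuous g' := (g.continuous.min continuous_const).max continuous_const
  have habs : ∀ x, |g' x| ≤ C := by
    intro x
    rw [abs_le]
    constructor
    · exact le_max_right _ _
    · exact max_le ((min_le_right _ _)) (by linarith)
  have hg'eq : ∀ ω, ω ∈ Oᶜ → g' ω = f ω := by
    intro ω hω
    have h1 : g ω = f ω := DFunLike.congr_fun hg ⟨ω, hω⟩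
    have h2 := hbd ω
    rw [abs_le] at h2
    simp only [hg'def, h1]
    rw [min_eq_left h2.2, max_eq_left h2.1]
  set bf : Ω →ᵇ ℝ := BoundedContinuousFunction.ofNormedAddCommGroup g' hg'cont C
    (fun x => by simpa [Real.norm_eq_abs] using habs x) with hbfdef
  have hGcont : Continuous fun Q : ProbabilityMeasure Ω => ∫ ω, g' ω ∂(Q : Measure Ω) := by
    have := MeasureTheory.ProbabilityMeasure.continuous_integral_boundedContinuousFunction
      (X := Ω) bf
    simpa [hbfdef] using this
  have key : ∀ Q : ProbabilityMeasure Ω, Q ∈ 𝔓 →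
      |(∫ ω, f ω ∂(Q:Measure Ω)) - ∫ ω, g' ω ∂(Q:Measure Ω)| ≤ 2*C*(ε₀:ℝ) := by
    intro Q hQ
    have hint_f : Integrable f (Q:Measure Ω) :=
      (integrable_const C).mono' hf.aestronglyMeasurable
        (ae_of_all _ fun ω => by simpa [Real.norm_eq_abs] using hbd ω)
    have hint_g : Integrable g' (Q:Measure Ω) :=
      (integrable_const C).mono' hg'cont.aestronglyMeasurable
        (ae_of_all _ fun ω => by simpa [Real.norm_eq_abs] using habs ω)
    rw [← integral_sub hint_f hint_g]
    have h1 : |∫ ω, (f ω - g' ω) ∂(Q:Measure Ω)| ≤ ∫ ω, |f ω - g' ω| ∂(Q:Measure Ω) := by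
      simpa [Real.norm_eq_abs] using
        norm_integral_le_integral_norm (μ := (Q:Measure Ω)) (f := fun ω => f ω - g' ω)
    have h2 : ∫ ω, |f ω - g' ω| ∂(Q:Measure Ω)
        ≤ ∫ ω, O.indicator (fun _ => 2*C) ω ∂(Q:Measure Ω) := by
      apply integral_mono (hint_f.sub hint_g).abs
        ((integrable_const (2*C)).indicator hOopen.measurableSet)
      intro ω
      simp only [Pi.sub_apply]
      by_cases hω : ω ∈ O
      · rw [Set.indicator_of_mem hω]
        calc |f ω - g' ω| ≤ |f ω| + |g' ω| := abs_sub _ _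
          _ ≤ 2*C := by linarith [hbd ω, habs ω]
      · rw [Set.indicator_of_notMem hω, hg'eq ω hω]
        simp
    have h3 : ∫ ω, O.indicator (fun _ => 2*C) ω ∂(Q:Measure Ω)
        = 2*C * ((Q:Measure Ω) O).toReal := by
      rw [integral_indicator_const _ hOopen.measurableSet]
      simp [mul_comm, ← MeasureTheory.ProbabilityMeasure.ennreal_coeFn_eq_coeFn_toMeasure]
    have h4 : ((Q:Measure Ω) O).toReal ≤ (ε₀:ℝ) := by
      have hQO := (hOsmall Q hQ).le
      rw [← MeasureTheory.ProbabilityMeasure.ennreal_coeFn_eq_coeFn_toMeasure]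
      rw [ENNReal.coe_toReal]
      exact_mod_cast hQO
    calc |∫ ω, (f ω - g' ω) ∂(Q:Measure Ω)| ≤ ∫ ω, |f ω - g' ω| ∂(Q:Measure Ω) := h1
      _ ≤ 2*C * ((Q:Measure Ω) O).toReal := h2.trans_eq h3
      _ ≤ 2*C*(ε₀:ℝ) := by
          exact mul_le_mul_of_nonneg_left h4 (by linarith)
  have hsmall : 2*C*(ε₀:ℝ) < ε/3 := by
    rw [hε₀coe]
    have hlt : 2*C * (ε/3/(2*C+1)) < (2*C+1) * (ε/3/(2*C+1)) :=
      mul_lt_mul_of_pos_right (by linarith) hδ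
    have heq : (2*C+1) * (ε/3/(2*C+1)) = ε/3 := by field_simp
    linarith
  have hmemF : ∀ᶠ Q in 𝓝[𝔓] P, Q ∈ 𝔓 := eventually_mem_nhdsWithin
  have hmid : ∀ᶠ Q : ProbabilityMeasure Ω in 𝓝[𝔓] P,
      dist (∫ ω, g' ω ∂(Q:Measure Ω)) (∫ ω, g' ω ∂((P:ProbabilityMeasure Ω):Measure Ω)) < ε/3 := by
    have htd : Tendsto (fun Q : ProbabilityMeasure Ω => ∫ ω, g' ω ∂(Q:Measure Ω)) (𝓝[𝔓] P)
        (𝓝 (∫ ω, g' ω ∂(P:Measure Ω))) :=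
      (hGcont.tendsto P).mono_left nhdsWithin_le_nhds
    exact Metric.tendsto_nhds.mp htd (ε/3) (by linarith)
  filter_upwards [hmemF, hmid] with Q hQ hQd
  have e1 := key Q hQ
  have e3 := key P hP
  rw [Real.dist_eq] at hQd ⊢
  have tri := abs_sub_le (∫ ω, f ω ∂(Q:Measure Ω)) (∫ ω, g' ω ∂(Q:Measure Ω))
    (∫ ω, f ω ∂(P:Measure Ω))
  have tri2 := abs_sub_le (∫ ω, g' ω ∂(Q:Measure Ω)) (∫ ω, g' ω ∂(P:Measure Ω))
    (∫ ω, f ω ∂(P:Measure Ω))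
  have e3' : |(∫ ω, g' ω ∂(P:Measure Ω)) - ∫ ω, f ω ∂(P:Measure Ω)| ≤ 2*C*(ε₀:ℝ) := by
    rw [abs_sub_comm]; exact e3
  linarith

/-- **Strict comparison (Theorem 3.1, special case).** Let `Ω` be a Polish space and `𝔓` a
nonempty weakly compact set of Borel probability measures on `Ω`.  Let `Z : Ω → ℝ` be Borel
measurable, quasi-continuous, integrable w.r.t. every `P ∈ 𝔓`, with
`sup_{P ∈ 𝔓} E_P[|Z|] < ∞`.  If `Z ≤ 0` quasi-surely and `inf_{P ∈ 𝔓} P(Z < 0) > 0`,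
then `sup_{P ∈ 𝔓} E_P[Z] < 0`. -/
theorem strict_comparison_special_case
    {Ω : Type*} [TopologicalSpace Ω] [PolishSpace Ω] [MeasurableSpace Ω] [BorelSpace Ω]
    (𝔓 : Set (ProbabilityMeasure Ω)) (h𝔓ne : 𝔓.Nonempty) (h𝔓cpt : IsCompact 𝔓)
    (Z : Ω → ℝ) (hZmeas : Measurable Z)
    (hZint : ∀ P ∈ 𝔓, Integrable Z (P : Measure Ω))
    (hZbdd : BddAbove (Set.range fun P : 𝔓 => ∫ ω, |Z ω| ∂((P : ProbabilityMeasure Ω) : Measure Ω)))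
    (hqc : ∀ ε : ℝ≥0, 0 < ε → ∃ O : Set Ω, IsOpen O ∧
      (⨆ P : 𝔓, (P : ProbabilityMeasure Ω) O) < ε ∧ ContinuousOn Z Oᶜ)
    (hqs : (⨆ P : 𝔓, (P : ProbabilityMeasure Ω) {ω | 0 < Z ω}) = 0)
    (hinf : 0 < ⨅ P : 𝔓, (P : ProbabilityMeasure Ω) {ω | Z ω < 0}) :
    (⨆ P : 𝔓, ∫ ω, Z ω ∂((P : ProbabilityMeasure Ω) : Measure Ω)) < 0 := by
  classical
  haveI hne : Nonempty ↥𝔓 := h𝔓ne.to_subtype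
  -- the truncated functions
  set W : Ω → ℝ := fun ω => min (Z ω) 0 with hWdef
  have hWmeas : Measurable W := hZmeas.min measurable_const
  set V : ℕ → Ω → ℝ := fun n ω => max (W ω) (-(n:ℝ)) with hVdef
  have hVmeas : ∀ n, Measurable (V n) := fun n => hWmeas.max measurable_const
  have hWle0 : ∀ ω, W ω ≤ 0 := fun ω => min_le_right _ _
  have hVle0 : ∀ n ω, V n ω ≤ 0 := fun n ω =>
    max_le (hWle0 ω) (neg_nonpos.mpr (Nat.cast_nonneg n))
  have hWleV : ∀ n ω, W ω ≤ V n ω := fun n ω => le_max_left _ _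
  have hWabsZ : ∀ ω, |W ω| ≤ |Z ω| := by
    intro ω
    rw [abs_le]
    exact ⟨le_min (neg_abs_le _) (neg_nonpos.mpr (abs_nonneg _)),
      (hWle0 ω).trans (abs_nonneg _)⟩
  have hVabsZ : ∀ n ω, |V n ω| ≤ |Z ω| := by
    intro n ω
    rw [abs_le]
    refine ⟨le_trans ?_ (hWleV n ω), (hVle0 n ω).trans (abs_nonneg _)⟩
    have := hWabsZ ω
    rw [abs_le] at this
    exact this.1
  have hVabs : ∀ n ω, |V n ω| ≤ (n:ℝ) := by
    intro n ω
    rw [abs_le]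
    exact ⟨le_max_right _ _, (hVle0 n ω).trans (Nat.cast_nonneg n)⟩
  -- integrability
  have hVint : ∀ (n : ℕ) (Q : ProbabilityMeasure Ω), Integrable (V n) (Q:Measure Ω) :=
    fun n Q => (integrable_const (n:ℝ)).mono' (hVmeas n).aestronglyMeasurable
      (ae_of_all _ fun ω => by simpa [Real.norm_eq_abs] using hVabs n ω)
  have hWint : ∀ P ∈ 𝔓, Integrable W ((P:ProbabilityMeasure Ω):Measure Ω) := fun P hP =>
    ((hZint P hP).abs).mono' hWmeas.aestronglyMeasurable
      (ae_of_all _ fun ω => by simpa [Real.norm_eq_abs] using hWabsZ ω)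
  -- a.e. facts
  have hnull : ∀ P, P ∈ 𝔓 → (P : Measure Ω) {ω | 0 < Z ω} = 0 := by
    intro P hP
    have hb : BddAbove (Set.range fun P : 𝔓 => (P:ProbabilityMeasure Ω) {ω | 0 < Z ω}) := by
      refine ⟨1, ?_⟩
      rintro x ⟨Q, rfl⟩
      exact MeasureTheory.ProbabilityMeasure.apply_le_one _ _
    have h1 : P {ω | 0 < Z ω} ≤ 0 := by
      rw [← hqs]
      exact le_ciSup hb ⟨P, hP⟩
    exact (MeasureTheory.ProbabilityMeasure.null_iff_toMeasure_null P _).mp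
      (le_antisymm h1 zero_le)
  have hae : ∀ P, P ∈ 𝔓 → Z =ᵐ[(P : Measure Ω)] W := by
    intro P hP
    have hle : ∀ᵐ ω ∂(P:Measure Ω), Z ω ≤ 0 := by
      rw [ae_iff]
      have : {ω | ¬ Z ω ≤ 0} = {ω | 0 < Z ω} := by ext ω; simp [not_le]
      rw [this]
      exact hnull P hP
    filter_upwards [hle] with ω hω
    simp [hWdef, min_eq_left hω]
  -- the functionals
  set F : ℕ → ProbabilityMeasure Ω → ℝ := fun n Q => ∫ ω, V n ω ∂(Q:Measure Ω) with hFdef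
  have hFcont : ∀ n, ContinuousOn (F n) 𝔓 := by
    intro n
    apply aux_integral_continuousOn 𝔓 (V n) (n:ℝ) (Nat.cast_nonneg n) (hVmeas n) (hVabs n)
    intro ε hε
    obtain ⟨O, hOopen, hOsmall, hOcont⟩ := hqc ε hε
    refine ⟨O, hOopen, ?_, ?_⟩
    · intro Q hQ
      refine lt_of_le_of_lt ?_ hOsmall
      have hb : BddAbove (Set.range fun P : 𝔓 => (P:ProbabilityMeasure Ω) O) := by
        refine ⟨1, ?_⟩
        rintro x ⟨R, rfl⟩
        exact MeasureTheory.ProbabilityMeasure.apply_le_one _ _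
      exact le_ciSup hb ⟨Q, hQ⟩
    · exact (hOcont.inf continuousOn_const).sup continuousOn_const
  set s : ℝ := ⨆ P : 𝔓, ∫ ω, Z ω ∂((P : ProbabilityMeasure Ω) : Measure Ω) with hsdef
  have hZleF : ∀ (n : ℕ) (P : ↥𝔓),
      (∫ ω, Z ω ∂((P : ProbabilityMeasure Ω) : Measure Ω)) ≤ F n ↑P := by
    intro n P
    have h1 : (∫ ω, Z ω ∂((P:ProbabilityMeasure Ω):Measure Ω))
        = ∫ ω, W ω ∂((P:ProbabilityMeasure Ω):Measure Ω) :=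
      integral_congr_ae (hae ↑P P.2)
    rw [h1]
    exact integral_mono (hWint ↑P P.2) (hVint n ↑P) (hWleV n)
  have hFmono : ∀ (n : ℕ) (Q : ProbabilityMeasure Ω), F (n+1) Q ≤ F n Q := by
    intro n Q
    apply integral_mono (hVint (n+1) Q) (hVint n Q)
    intro ω
    apply max_le_max le_rfl
    push_cast
    linarith
  haveI : CompactSpace ↥𝔓 := isCompact_iff_compactSpace.mp h𝔓cpt
  set K : ℕ → Set ↥𝔓 := fun n => {P : ↥𝔓 | s ≤ F n ↑P} with hKdef
  have hKcl : ∀ n, IsClosed (K n) := fun n =>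
    isClosed_le continuous_const ((hFcont n).restrict)
  have hKne : ∀ n, (K n).Nonempty := by
    intro n
    obtain ⟨Pm, _, hPm⟩ := isCompact_univ.exists_isMaxOn univ_nonempty
      ((hFcont n).restrict).continuousOn
    refine ⟨Pm, ?_⟩
    exact ciSup_le fun P => (hZleF n P).trans (hPm (mem_univ P))
  have hKsub : ∀ n, K (n+1) ⊆ K n := fun n P hP => le_trans hP (hFmono n ↑P)
  obtain ⟨P₀, hP₀⟩ := IsCompact.nonempty_iInter_of_sequence_nonempty_isCompact_isClosed
    K hKsub hKne ((hKcl 0).isCompact) hKcl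
  have hP₀n : ∀ n, s ≤ F n ↑P₀ := fun n => mem_iInter.mp hP₀ n
  -- dominated convergence
  have htend : Tendsto (fun n => F n ↑P₀) atTop
      (𝓝 (∫ ω, W ω ∂((P₀ : ProbabilityMeasure Ω) : Measure Ω))) := by
    apply tendsto_integral_of_dominated_convergence (fun ω => |Z ω|)
      (fun n => (hVmeas n).aestronglyMeasurable) ((hZint ↑P₀ P₀.2).abs)
      (fun n => ae_of_all _ fun ω => by simpa [Real.norm_eq_abs] using hVabsZ n ω)
    apply ae_of_all
    intro ω
    have hev : ∀ᶠ n : ℕ in atTop, V n ω = W ω := by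
      filter_upwards [eventually_ge_atTop ⌈-(W ω)⌉₊] with n hn
      have h1 : -(W ω) ≤ (n:ℝ) := (Nat.le_ceil _).trans (by exact_mod_cast hn)
      exact max_eq_left (by linarith)
    exact Tendsto.congr' (hev.mono fun n h => h.symm) tendsto_const_nhds
  have hsW : s ≤ ∫ ω, W ω ∂((P₀ : ProbabilityMeasure Ω) : Measure Ω) :=
    ge_of_tendsto' htend hP₀n
  -- strict negativity at P₀
  have hc : (0:ℝ≥0) < (P₀ : ProbabilityMeasure Ω) {ω | Z ω < 0} :=
    lt_of_lt_of_le hinf (ciInf_le (OrderBot.bddBelow _) P₀)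
  have hcm : ((P₀ : ProbabilityMeasure Ω) : Measure Ω) {ω | Z ω < 0} ≠ 0 := by
    intro h
    rw [← MeasureTheory.ProbabilityMeasure.null_iff_toMeasure_null] at h
    rw [h] at hc
    exact lt_irrefl _ hc
  have hV1 : ∫ ω, V 1 ω ∂((P₀ : ProbabilityMeasure Ω) : Measure Ω) < 0 := by
    by_contra hcon
    push_neg at hcon
    have hnn : 0 ≤ fun ω => -(V 1 ω) := fun ω => neg_nonneg.mpr (hVle0 1 ω)
    have hinteg : Integrable (fun ω => -(V 1 ω)) ((P₀:ProbabilityMeasure Ω):Measure Ω) :=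
      (hVint 1 ↑P₀).neg
    have hzero : ∫ ω, -(V 1 ω) ∂((P₀:ProbabilityMeasure Ω):Measure Ω) = 0 := by
      rw [integral_neg]
      have hge : 0 ≤ ∫ ω, -(V 1 ω) ∂((P₀:ProbabilityMeasure Ω):Measure Ω) :=
        integral_nonneg hnn
      rw [integral_neg] at hge
      linarith
    have haez := (integral_eq_zero_iff_of_nonneg hnn hinteg).mp hzero
    have hnull2 : ((P₀:ProbabilityMeasure Ω):Measure Ω) {ω | ¬ (-(V 1 ω) = 0)} = 0 :=
      ae_iff.mp haez
    apply hcm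
    apply measure_mono_null _ hnull2
    intro ω hω
    simp only [mem_setOf_eq] at hω ⊢
    have hWneg : W ω < 0 := by
      simp only [hWdef]
      rw [min_eq_left hω.le]
      exact hω
    have hVneg : V 1 ω < 0 := by
      simp only [hVdef]
      apply max_lt hWneg
      norm_num
    intro h
    rw [neg_eq_zero] at h
    rw [h] at hVneg
    exact lt_irrefl _ hVneg
  have hWV1 : (∫ ω, W ω ∂((P₀:ProbabilityMeasure Ω):Measure Ω))
      ≤ ∫ ω, V 1 ω ∂((P₀:ProbabilityMeasure Ω):Measure Ω) :=
    integral_mono (hWint ↑P₀ P₀.2) (hVint 1 ↑P₀) (hWleV 1)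
  calc s ≤ ∫ ω, W ω ∂((P₀:ProbabilityMeasure Ω):Measure Ω) := hsW
    _ ≤ ∫ ω, V 1 ω ∂((P₀:ProbabilityMeasure Ω):Measure Ω) := hWV1
    _ < 0 := hV1
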